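/- Let n ≥ 1 and let σ_1, σ_2 ∈ S_n. Then the number of ordered pairs (τ_1, τ_2) ∈ S_n × S_n with P_{τ_1} + P_{τ_2} = P_{σ_1} + P_{σ_2} equals 2^{c(σ_1,σ_2)}, where c(σ_1,σ_2) denotes the number of cycles of length at least 2 in the cycle decomposition of the permutation σ_1∘σ_2^{−1}. -/

import Mathlib

open scoped BigOperators

noncomputable section

open Equiv Equiv.Perm Finset

theorem Equiv.Perm.apply_inv_self {α : Type*} (f : Equiv.Perm α) (x : α) : f (f⁻¹ x) = x :=
  f.apply_symm_apply x

theorem Equiv.Perm.inv_apply_self {α : Type*} (f : Equiv.Perm α) (x : α) : f⁻¹ (f x) = x :=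
  f.symm_apply_apply x

section Aux

variable {α : Type*} [Fintype α] [DecidableEq α] {π τ : Equiv.Perm α}

lemma aux_down (hQ : ∀ x, τ x = x ∨ τ x = π x) {y : α} (h : τ y = y) :
    τ (π⁻¹ y) = π⁻¹ y := by
  rcases hQ (π⁻¹ y) with h1 | h1
  · exact h1
  · have h2 : τ (π⁻¹ y) = y := by rw [h1]; exact π.apply_inv_self y
    have h3 : π⁻¹ y = y := τ.injective (by rw [h2, h])
    rw [h3, h]

lemma aux_down_pow (hQ : ∀ x, τ x = x ∨ τ x = π x) {y : α} (h : τ y = y) (k : ℕ) :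
    τ ((π⁻¹ ^ k) y) = (π⁻¹ ^ k) y := by
  induction k with
  | zero => simpa using h
  | succ k ih =>
      rw [pow_succ', Equiv.Perm.mul_apply]
      exact aux_down hQ ih

lemma aux_up (hQ : ∀ x, τ x = x ∨ τ x = π x) {y : α} (h : τ y = y) :
    τ (π y) = π y := by
  have hpos : 0 < orderOf π := orderOf_pos π
  have h2 : π ^ (orderOf π - 1) * π = 1 := by
    rw [← pow_succ, Nat.sub_add_cancel hpos, pow_orderOf_eq_one]
  have h3 : π ^ (orderOf π - 1) = π⁻¹ := eq_inv_of_mul_eq_one_left h2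
  have hm : π⁻¹ ^ (orderOf π - 1) = π := by
    rw [inv_pow, h3, inv_inv]
  have := aux_down_pow hQ h (orderOf π - 1)
  rwa [hm] at this

lemma aux_ne (hQ : ∀ x, τ x = x ∨ τ x = π x) {y : α} (h : τ y ≠ y) :
    τ (π y) ≠ π y := by
  intro hc
  apply h
  have := aux_down hQ hc
  simpa using this

lemma aux_ne_pow (hQ : ∀ x, τ x = x ∨ τ x = π x) {y : α} (h : τ y ≠ y) (k : ℕ) :
    τ ((π ^ k) y) ≠ (π ^ k) y := by
  induction k with
  | zero => simpa using h
  | succ k ih =>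
      rw [pow_succ', Equiv.Perm.mul_apply]
      exact aux_ne hQ ih

/-- Pointwise characterization of the matrix equation. -/
lemma permMat_add_eq_iff {n : ℕ} (a b c d : Equiv.Perm (Fin n)) :
    (Matrix.of fun i j => if a i = j then (1:ℕ) else 0) +
      (Matrix.of fun i j => if b i = j then (1:ℕ) else 0) =
    (Matrix.of fun i j => if c i = j then (1:ℕ) else 0) +
      (Matrix.of fun i j => if d i = j then (1:ℕ) else 0) ↔
    ∀ i, (a i = c i ∧ b i = d i) ∨ (a i = d i ∧ b i = c i) := by
  constructor
  · intro h i
    have hj : ∀ j, ((if a i = j then (1:ℕ) else 0) + (if b i = j then 1 else 0))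
        = ((if c i = j then 1 else 0) + (if d i = j then 1 else 0)) := by
      intro j
      have := congrFun (congrFun h i) j
      simpa [Matrix.add_apply] using this
    by_cases e1 : a i = c i
    · left
      refine ⟨e1, ?_⟩
      by_cases e5 : c i = d i
      · have h := hj (d i)
        rw [if_pos (e1.trans e5), if_pos e5, if_pos rfl] at h
        by_contra e4
        rw [if_neg e4] at h
        omega
      · have h := hj (d i)
        have hne1 : ¬ (a i = d i) := fun hh => e5 (e1.symm.trans hh)
        rw [if_neg hne1, if_neg e5, if_pos rfl] at h
        by_contra e4
        rw [if_neg e4] at h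
        omega
    · right
      have h := hj (c i)
      rw [if_neg e1, if_pos rfl] at h
      have e3 : b i = c i := by
        by_contra e3
        rw [if_neg e3] at h
        omega
      have h' := hj (a i)
      have hne2 : ¬ (c i = a i) := fun hh => e1 hh.symm
      rw [if_pos rfl, if_neg hne2] at h'
      have e2 : d i = a i := by
        by_contra e2
        rw [if_neg e2] at h'
        omega
      exact ⟨e2.symm, e3⟩
  · intro h
    ext i j
    simp only [Matrix.add_apply, Matrix.of_apply]
    rcases h i with ⟨h1, h2⟩ | ⟨h1, h2⟩
    · rw [h1, h2]
    · rw [h1, h2, add_comm]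

set_option maxHeartbeats 1600000 in
/-- Counting permutations dominated by `π`. -/
lemma card_Q (π : Equiv.Perm α) :
    Nat.card {τ : Equiv.Perm α // ∀ x, τ x = x ∨ τ x = π x} =
      2 ^ Multiset.card π.cycleType := by
  classical
  have hcard : Nat.card {τ : Equiv.Perm α // ∀ x, τ x = x ∨ τ x = π x}
      = Nat.card ({c : Equiv.Perm α // c ∈ π.cycleFactorsFinset} → Bool) := by
    set Pb : ({c : Equiv.Perm α // c ∈ π.cycleFactorsFinset} → Bool) → α → Prop :=
      fun b x => ∃ c : {c : Equiv.Perm α // c ∈ π.cycleFactorsFinset},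
        b c = true ∧ x ∈ (c : Equiv.Perm α).support with hPbdef
    have hπc : ∀ (c : Equiv.Perm α), c ∈ π.cycleFactorsFinset →
        ∀ x ∈ c.support, π x = c x := by
      intro c hc x hx
      exact ((Equiv.Perm.mem_cycleFactorsFinset_iff.mp hc).2 x hx).symm
    have hPbπ : ∀ b x, Pb b x → Pb b (π x) := by
      rintro b x ⟨c, hc, hx⟩
      refine ⟨c, hc, ?_⟩
      rw [hπc c c.2 x hx]
      exact Equiv.Perm.apply_mem_support.mpr hx
    have hPbπ' : ∀ b x, Pb b x → Pb b (π⁻¹ x) := by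
      rintro b x ⟨c, hc, hx⟩
      have hx' : (c : Equiv.Perm α)⁻¹ x ∈ (c : Equiv.Perm α).support := by
        rw [← Equiv.Perm.support_inv]
        exact Equiv.Perm.apply_mem_support.mpr
          (by rwa [Equiv.Perm.support_inv])
      have heq : π⁻¹ x = (c : Equiv.Perm α)⁻¹ x := by
        apply π.injective
        rw [Equiv.Perm.apply_inv_self, hπc c c.2 _ hx', Equiv.Perm.apply_inv_self]
      exact ⟨c, hc, heq ▸ hx'⟩
    refine Nat.card_congr (Equiv.symm ?_)
    refine
      { toFun := fun b =>
          ⟨⟨fun x => if Pb b x then π x else x, fun x => if Pb b x then π⁻¹ x else x,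
            ?_, ?_⟩, ?_⟩,
        invFun := fun τ => fun c =>
          decide (∀ y ∈ (c : Equiv.Perm α).support, τ.1 y = π y),
        left_inv := ?_, right_inv := ?_ }
    · -- left inverse of the constructed permutation
      intro x
      dsimp only
      by_cases h : Pb b x
      · rw [if_pos h, if_pos (hPbπ b x h), Equiv.Perm.inv_apply_self]
      · rw [if_neg h, if_neg h]
    · -- right inverse of the constructed permutation
      intro x
      dsimp only
      by_cases h : Pb b x
      · rw [if_pos h, if_pos (hPbπ' b x h), Equiv.Perm.apply_inv_self]
      · rw [if_neg h, if_neg h]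
    · -- the Q property
      intro x
      by_cases h : Pb b x
      · right; simp only [Equiv.coe_fn_mk, if_pos h]
      · left; simp only [Equiv.coe_fn_mk, if_neg h]
    · -- b ↦ τ ↦ b
      intro b
      funext c
      simp only [Equiv.coe_fn_mk]
      by_cases hb : b c = true
      · rw [hb, decide_eq_true_eq]
        intro y hy
        rw [if_pos ⟨c, hb, hy⟩]
      · have hb' : b c = false := by simpa using hb
        rw [hb', decide_eq_false_iff_not]
        intro hall
        obtain ⟨y, hy, -⟩ := (Equiv.Perm.mem_cycleFactorsFinset_iff.mp c.2).1
        have hy' : y ∈ (c : Equiv.Perm α).support := Equiv.Perm.mem_support.mpr hy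
        have hnPb : ¬ Pb b y := by
          rintro ⟨d, hd, hyd⟩
          have hdc : (d : Equiv.Perm α) = (c : Equiv.Perm α) := by
            rw [Equiv.Perm.cycle_is_cycleOf hyd d.2, Equiv.Perm.cycle_is_cycleOf hy' c.2]
          have : d = c := Subtype.ext hdc
          rw [this] at hd
          exact hb hd
        have := hall y hy'
        rw [if_neg hnPb] at this
        apply hy
        rw [← hπc c c.2 y hy', ← this]
    · -- τ ↦ b ↦ τ
      intro τ
      apply Subtype.ext
      apply Equiv.ext
      intro x
      simp only [Equiv.coe_fn_mk]
      by_cases h : Pb (fun c => decide (∀ y ∈ (c : Equiv.Perm α).support, τ.1 y = π y)) x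
      · obtain ⟨c, hc, hx⟩ := h
        rw [if_pos ⟨c, hc, hx⟩]
        exact (of_decide_eq_true hc x hx).symm
      · rw [if_neg h]
        rcases τ.2 x with h1 | h1
        · exact h1.symm
        · by_cases hfix : π x = x
          · rw [h1, hfix]
          · exfalso
            apply h
            refine ⟨⟨π.cycleOf x,
              Equiv.Perm.cycleOf_mem_cycleFactorsFinset_iff.mpr
                (Equiv.Perm.mem_support.mpr hfix)⟩, ?_, ?_⟩
            · rw [decide_eq_true_eq]
              intro y hy
              obtain ⟨hsame, -⟩ := Equiv.Perm.mem_support_cycleOf_iff.mp hy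
              obtain ⟨k, hk⟩ := hsame.exists_pow_eq π
              have hτx : τ.1 x ≠ x := by rw [h1]; exact hfix
              have hne := aux_ne_pow τ.2 hτx k
              rw [hk.2.2] at hne
              rcases τ.2 y with h2 | h2
              · exact absurd h2 hne
              · exact h2
            · exact Equiv.Perm.mem_support_cycleOf_iff.mpr
                ⟨Equiv.Perm.SameCycle.refl _ _, Equiv.Perm.mem_support.mpr hfix⟩
  rw [hcard, Nat.card_eq_fintype_card, Fintype.card_fun, Fintype.card_coe,
    Fintype.card_bool]
  congr 1
  rw [Equiv.Perm.cycleType_def, Multiset.card_map]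
  rfl

end Aux

/-- The permutation matrix `P_σ` with entries `P_σ(i,j) = 1` iff `σ(i) = j`. -/
def permMat {n : ℕ} (σ : Equiv.Perm (Fin n)) : Matrix (Fin n) (Fin n) ℕ :=
  Matrix.of fun i j => if σ i = j then 1 else 0

/-- For `n ≥ 1` and permutations `σ_1, σ_2` of `{1,…,n}`, the number of
ordered pairs `(τ_1,τ_2)` of permutations with `P_{τ_1} + P_{τ_2} = P_{σ_1} + P_{σ_2}`
equals `2^{c(σ_1,σ_2)}`, where `c(σ_1,σ_2)` is the number of cycles of length at least `2`
of `σ_1∘σ_2⁻¹` (the number of entries of its cycle type). -/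
theorem statement_17 (n : ℕ) (hn : 1 ≤ n) (σ₁ σ₂ : Equiv.Perm (Fin n)) :
    Nat.card {p : Equiv.Perm (Fin n) × Equiv.Perm (Fin n) //
        permMat p.1 + permMat p.2 = permMat σ₁ + permMat σ₂} =
      2 ^ Multiset.card (σ₁ * σ₂⁻¹).cycleType := by
  classical
  set π : Equiv.Perm (Fin n) := σ₁ * σ₂⁻¹ with hπ
  have hchar : ∀ p : Equiv.Perm (Fin n) × Equiv.Perm (Fin n),
      (permMat p.1 + permMat p.2 = permMat σ₁ + permMat σ₂) ↔
      ∀ i, (p.1 i = σ₁ i ∧ p.2 i = σ₂ i) ∨ (p.1 i = σ₂ i ∧ p.2 i = σ₁ i) := by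
    intro p
    exact permMat_add_eq_iff p.1 p.2 σ₁ σ₂
  have hQ_of : ∀ p : Equiv.Perm (Fin n) × Equiv.Perm (Fin n),
      (permMat p.1 + permMat p.2 = permMat σ₁ + permMat σ₂) →
      ∀ x, (p.1 * σ₂⁻¹) x = x ∨ (p.1 * σ₂⁻¹) x = π x := by
    intro p hp x
    rcases (hchar p).mp hp (σ₂⁻¹ x) with ⟨h1, -⟩ | ⟨h1, -⟩
    · right
      simp only [Equiv.Perm.mul_apply, hπ]
      exact h1
    · left
      simp only [Equiv.Perm.mul_apply]
      rw [h1, Equiv.Perm.apply_inv_self]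
  have e1 : {p : Equiv.Perm (Fin n) × Equiv.Perm (Fin n) //
        permMat p.1 + permMat p.2 = permMat σ₁ + permMat σ₂} ≃
      {τ : Equiv.Perm (Fin n) // ∀ x, τ x = x ∨ τ x = π x} := by
    refine
      { toFun := fun p => ⟨p.1.1 * σ₂⁻¹, hQ_of p.1 p.2⟩,
        invFun := fun τ => ⟨(τ.1 * σ₂, τ.1⁻¹ * σ₁), ?_⟩,
        left_inv := ?_, right_inv := ?_ }
    · apply (hchar _).mpr
      intro i
      rcases τ.2 (σ₂ i) with h | h
      · right
        constructor
        · simpa [Equiv.Perm.mul_apply] using h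
        · have hup : τ.1 (π (σ₂ i)) = π (σ₂ i) := aux_up τ.2 h
          have hπσ : π (σ₂ i) = σ₁ i := by
            simp [hπ, Equiv.Perm.mul_apply]
          rw [hπσ] at hup
          simp only [Equiv.Perm.mul_apply]
          apply τ.1.injective
          rw [Equiv.Perm.apply_inv_self, hup]
      · left
        have hπσ : π (σ₂ i) = σ₁ i := by
          simp [hπ, Equiv.Perm.mul_apply]
        rw [hπσ] at h
        constructor
        · simpa [Equiv.Perm.mul_apply] using h
        · simp only [Equiv.Perm.mul_apply]
          apply τ.1.injective
          rw [Equiv.Perm.apply_inv_self, ← h]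
    · rintro ⟨⟨p1, p2⟩, hp⟩
      apply Subtype.ext
      dsimp only
      have hQ := hQ_of (p1, p2) hp
      refine Prod.ext ?_ ?_
      · apply Equiv.ext
        intro x
        simp [Equiv.Perm.mul_apply]
      · apply Equiv.ext
        intro i
        rw [mul_inv_rev, inv_inv]
        simp only [Equiv.Perm.mul_apply]
        rcases (hchar (p1, p2)).mp hp i with ⟨h1, h2⟩ | ⟨h1, h2⟩
        · have : p1⁻¹ (σ₁ i) = i := by
            rw [show σ₁ i = p1 i from h1.symm, Equiv.Perm.inv_apply_self]
          rw [this]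
          exact h2.symm
        · have hfix : (p1 * σ₂⁻¹) (σ₂ i) = σ₂ i := by
            simp only [Equiv.Perm.mul_apply, Equiv.Perm.inv_apply_self]
            exact h1
          have hup : (p1 * σ₂⁻¹) (π (σ₂ i)) = π (σ₂ i) := aux_up hQ hfix
          have hπσ : π (σ₂ i) = σ₁ i := by
            simp [hπ, Equiv.Perm.mul_apply]
          rw [hπσ] at hup
          simp only [Equiv.Perm.mul_apply] at hup
          have : p1⁻¹ (σ₁ i) = σ₂⁻¹ (σ₁ i) := by
            apply p1.injective
            rw [Equiv.Perm.apply_inv_self, hup]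
          rw [this, Equiv.Perm.apply_inv_self]
          exact h2.symm
    · rintro ⟨τ, hτ⟩
      apply Subtype.ext
      dsimp only
      apply Equiv.ext
      intro x
      simp [Equiv.Perm.mul_apply]
  rw [Nat.card_congr e1]
  exact card_Q π
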